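/- Let X be a separable complex Banach space and let T be a bounded linear operator on X. Suppose there exist dense subsets D₁, D₂ ⊆ X and a sequence of maps S_n : D₂ → X such that, as n → ∞: (1) ‖T^n x‖ · ‖S_n y‖ → 0 for all x ∈ D₁ and y ∈ D₂; (2) S_n y → 0 for all y ∈ D₂; (3) T^n S_n y → y for all y ∈ D₂. Then T is compound. -/

import Mathlib

open Filter Topology Set Pointwise

variable {X : Type*} [NormedAddCommGroup X] [NormedSpace ℂ X]

/-- `T` is compound: for all nonempty open `U, V` there are `N` and scalars `α n`
with `0 < ‖α n‖ ≤ 1` such that `T^n (α n • U) ∩ V ≠ ∅` for all `n ≥ N`. -/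
def Compound (T : X →L[ℂ] X) : Prop :=
  ∀ U V : Set X, IsOpen U → U.Nonempty → IsOpen V → V.Nonempty →
    ∃ N : ℕ, ∃ α : ℕ → ℂ, ∀ n ≥ N,
      (0 < ‖α n‖ ∧ ‖α n‖ ≤ 1) ∧ (((T ^ n) '' (α n • U)) ∩ V).Nonempty

/-- `T` is topologically mixing. -/
def TopologicallyMixing (T : X →L[ℂ] X) : Prop :=
  ∀ U V : Set X, IsOpen U → U.Nonempty → IsOpen V → V.Nonempty →
    ∃ N : ℕ, ∀ n ≥ N, (((T ^ n) '' U) ∩ V).Nonempty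

/-- `T` is disk transitive. -/
def DiskTransitive (T : X →L[ℂ] X) : Prop :=
  ∀ U V : Set X, IsOpen U → U.Nonempty → IsOpen V → V.Nonempty →
    ∃ n : ℕ, ∃ α : ℂ, 0 < ‖α‖ ∧ ‖α‖ ≤ 1 ∧ (((T ^ n) '' (α • U)) ∩ V).Nonempty

/-- The direct sum `T 0 ⊕ ⋯ ⊕ T (k-1)` is `k`-bitransitive: for all nonempty open
`U i, V i` there are `n` and scalars `α i` with `0 < ‖α i‖ ≤ 1` such that
`(T 0 ⊕ ⋯)^n (α 0 • U 0 ⊕ ⋯) ∩ (V 0 ⊕ ⋯) ≠ ∅`, stated componentwise (an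
intersection of product sets is nonempty iff each componentwise intersection is). -/
def kBitransitive {k : ℕ} (T : Fin k → X →L[ℂ] X) : Prop :=
  ∀ U V : Fin k → Set X,
    (∀ i, IsOpen (U i) ∧ (U i).Nonempty) →
    (∀ i, IsOpen (V i) ∧ (V i).Nonempty) →
    ∃ n : ℕ, ∃ α : Fin k → ℂ,
      (∀ i, 0 < ‖α i‖ ∧ ‖α i‖ ≤ 1) ∧
      ∀ i, (((T i ^ n) '' (α i • U i)) ∩ V i).Nonempty

/-- The cross set `C_T(A,B)`. -/
def crossSet (T : X →L[ℂ] X) (A B : Set X) : Set ℕ :=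
  {n | ∃ α : ℂ, 0 < ‖α‖ ∧ ‖α‖ ≤ 1 ∧ (((T ^ n) '' (α • A)) ∩ B).Nonempty}

/-- The junction set `J_T(A,B)`. -/
def junctionSet (T : X →L[ℂ] X) (A B : Set X) : Set (ℕ × ℂ) :=
  {p | 0 < ‖p.2‖ ∧ ‖p.2‖ ≤ 1 ∧ (((T ^ p.1) '' (p.2 • A)) ∩ B).Nonempty}

/-- A subset of `ℕ × ℂ` is bifinite if it contains `{(n, a n) : n ∈ K}` for some
cofinite `K ⊆ ℕ` and some sequence `a : ℕ → ℂ`. -/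
def Bifinite (A : Set (ℕ × ℂ)) : Prop :=
  ∃ K : Set ℕ, Kᶜ.Finite ∧ ∃ a : ℕ → ℂ, ∀ n ∈ K, (n, a n) ∈ A

/-- the compound criterion without a scalar sequence. -/
theorem compound_of_criterion'
    {X : Type*} [NormedAddCommGroup X] [NormedSpace ℂ X] [CompleteSpace X]
    [TopologicalSpace.SeparableSpace X] (T : X →L[ℂ] X)
    (D₁ D₂ : Set X) (hD₁ : Dense D₁) (hD₂ : Dense D₂)
    (S : ℕ → X → X)
    (h1 : ∀ x ∈ D₁, ∀ y ∈ D₂,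
      Tendsto (fun n => ‖(T ^ n) x‖ * ‖S n y‖) atTop (𝓝 0))
    (h2 : ∀ y ∈ D₂, Tendsto (fun n => S n y) atTop (𝓝 0))
    (h3 : ∀ y ∈ D₂, Tendsto (fun n => (T ^ n) (S n y)) atTop (𝓝 y)) :
    Compound T := by
  intro U V hU hUne hV hVne
  obtain ⟨x, hxU, hxD⟩ := hD₁.inter_open_nonempty U hU hUne
  obtain ⟨y, hyV, hyD⟩ := hD₂.inter_open_nonempty V hV hVne
  obtain ⟨ε₁, hε₁, hball₁⟩ := Metric.isOpen_iff.mp hU x hxU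
  obtain ⟨ε₂, hε₂, hball₂⟩ := Metric.isOpen_iff.mp hV y hyV
  set a : ℕ → ℝ := fun n => ‖(T ^ n) x‖ with ha
  set b : ℕ → ℝ := fun n => ‖S n y‖ with hb
  set c : ℕ → ℝ := fun n => 1 / (((n : ℝ) + 1) ^ 2 * (a n + 1)) with hc
  set r : ℕ → ℝ := fun n => Real.sqrt ((b n + c n) / (a n + 1)) with hr
  set α : ℕ → ℝ := fun n => min 1 (r n) with hα
  have han : ∀ n, 0 ≤ a n := fun n => norm_nonneg _
  have hbn : ∀ n, 0 ≤ b n := fun n => norm_nonneg _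
  have ha1 : ∀ n, (0:ℝ) < a n + 1 := fun n => by positivity
  have hcn : ∀ n, 0 < c n := fun n => by
    have := ha1 n; rw [hc]; positivity
  have hrpos : ∀ n, 0 < r n := fun n =>
    Real.sqrt_pos.mpr (div_pos (by nlinarith [hbn n, hcn n]) (ha1 n))
  have hαpos : ∀ n, 0 < α n := fun n => lt_min one_pos (hrpos n)
  have hαle : ∀ n, α n ≤ 1 := fun n => min_le_left _ _
  have hab : Tendsto (fun n => a n * b n) atTop (𝓝 0) := h1 x hxD y hyD
  have hb0 : Tendsto b atTop (𝓝 0) := by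
    have := (h2 y hyD).norm
    simpa using this
  have hinv2 : Tendsto (fun n : ℕ => 1 / ((n : ℝ) + 1) ^ 2) atTop (𝓝 0) := by
    apply squeeze_zero (fun n => by positivity) (g := fun n : ℕ => 1 / ((n : ℝ) + 1))
      (fun n => by
        apply one_div_le_one_div_of_le (by positivity)
        nlinarith [Nat.cast_nonneg (α := ℝ) n])
      tendsto_one_div_add_atTop_nhds_zero_nat
  -- key squared bound : r n ^ 2 * (a n + 1) = b n + c n, and c n * (a n + 1) = 1/(n+1)^2
  have hrsq : ∀ n, r n ^ 2 = (b n + c n) / (a n + 1) := fun n => by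
    rw [hr]; exact Real.sq_sqrt (by positivity)
  have hca : ∀ n, c n * (a n + 1) = 1 / ((n : ℝ) + 1) ^ 2 := fun n => by
    show 1 / (((n : ℝ) + 1) ^ 2 * (a n + 1)) * (a n + 1) = _
    rw [one_div, one_div, mul_inv, mul_assoc, inv_mul_cancel₀ (ha1 n).ne', mul_one]
  -- (ii)  α n * a n → 0
  have key2 : Tendsto (fun n => α n * a n) atTop (𝓝 0) := by
    have hub : ∀ n, α n * a n ≤ Real.sqrt (b n * (a n + 1) + 1 / ((n : ℝ) + 1) ^ 2) := by
      intro n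
      have h1' : α n * a n ≤ r n * (a n + 1) := by
        have := han n
        have h2' : α n ≤ r n := min_le_right _ _
        nlinarith [hαpos n, hrpos n]
      refine h1'.trans ?_
      have heq : r n * (a n + 1) = Real.sqrt ((b n + c n) * (a n + 1)) := by
        rw [← Real.sqrt_sq (mul_pos (hrpos n) (ha1 n)).le]
        congr 1
        rw [mul_pow, hrsq n, div_mul_eq_mul_div, div_eq_iff (ha1 n).ne']
        ring
      rw [heq]
      apply Real.sqrt_le_sqrt
      rw [← hca n]; nlinarith [hbn n, hcn n, ha1 n]
    have hlim : Tendsto (fun n => Real.sqrt (b n * (a n + 1) + 1 / ((n : ℝ) + 1) ^ 2))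
        atTop (𝓝 0) := by
      have : Tendsto (fun n => b n * (a n + 1) + 1 / ((n : ℝ) + 1) ^ 2) atTop (𝓝 0) := by
        have h' : Tendsto (fun n => b n * (a n + 1)) atTop (𝓝 0) := by
          have : (fun n => b n * (a n + 1)) = fun n => a n * b n + b n := by
            funext n; ring
          rw [this]
          simpa using hab.add hb0
        simpa using h'.add hinv2
      simpa using this.sqrt
    exact squeeze_zero (fun n => mul_nonneg (hαpos n).le (han n)) hub hlim
  -- (iii)  b n / α n → 0
  have key3 : Tendsto (fun n => b n / α n) atTop (𝓝 0) := by
    have hub : ∀ n, b n / α n ≤ b n + Real.sqrt (b n * (a n + 1)) := by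
      intro n
      rcases le_total (r n) 1 with h | h
      · have hαr : α n = r n := min_eq_right h
        rw [hαr, div_le_iff₀ (hrpos n)]
        have hbr : b n ≤ Real.sqrt (b n * (a n + 1)) * r n := by
          rw [hr, ← Real.sqrt_mul (by positivity)]
          have : b n * (a n + 1) * ((b n + c n) / (a n + 1)) = b n * (b n + c n) := by
            rw [mul_div_assoc', div_eq_iff (ha1 n).ne']; ring
          rw [this]
          calc b n = Real.sqrt (b n * b n) := (Real.sqrt_mul_self (hbn n)).symm
            _ ≤ Real.sqrt (b n * (b n + c n)) :=
                Real.sqrt_le_sqrt (by nlinarith [mul_nonneg (hbn n) (hcn n).le])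
        nlinarith [hbn n, hrpos n, Real.sqrt_nonneg (b n * (a n + 1)), hbr,
          mul_nonneg (hbn n) (hrpos n).le]
      · have hαr : α n = 1 := min_eq_left h
        rw [hαr, div_one]
        nlinarith [Real.sqrt_nonneg (b n * (a n + 1))]
    have hlim : Tendsto (fun n => b n + Real.sqrt (b n * (a n + 1))) atTop (𝓝 0) := by
      have h' : Tendsto (fun n => b n * (a n + 1)) atTop (𝓝 0) := by
        have : (fun n => b n * (a n + 1)) = fun n => a n * b n + b n := by
          funext n; ring
        rw [this]; simpa using hab.add hb0
      simpa using hb0.add h'.sqrt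
    exact squeeze_zero (fun n => div_nonneg (hbn n) (hαpos n).le) hub hlim
  -- eventual bounds
  have hev1 : ∀ᶠ n in atTop, b n / α n < ε₁ := key3.eventually_lt_const hε₁ |>.mono (fun n hn => hn)
  have hev2 : ∀ᶠ n in atTop, α n * a n < ε₂ / 2 := key2.eventually_lt_const (by linarith)
  have hev3 : ∀ᶠ n in atTop, ‖(T ^ n) (S n y) - y‖ < ε₂ / 2 := by
    have := (h3 y hyD).sub_const y
    have := this.norm
    simp only [sub_self, norm_zero] at this
    exact this.eventually_lt_const (by linarith)
  obtain ⟨N, hN⟩ := (hev1.and (hev2.and hev3)).exists_forall_of_atTop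
  refine ⟨N, fun n => ((α n : ℝ) : ℂ), fun n hn => ?_⟩
  obtain ⟨hn1, hn2, hn3⟩ := hN n hn
  have hαC : ‖((α n : ℝ) : ℂ)‖ = α n := by
    rw [Complex.norm_real, Real.norm_eq_abs, abs_of_pos (hαpos n)]
  have hαne : ((α n : ℝ) : ℂ) ≠ 0 := by
    simpa using (hαpos n).ne'
  refine ⟨⟨by rw [hαC]; exact hαpos n, by rw [hαC]; exact hαle n⟩, ?_⟩
  set u : X := x + (((α n : ℝ) : ℂ))⁻¹ • S n y with hu
  have huU : u ∈ U := by
    apply hball₁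
    rw [Metric.mem_ball, dist_eq_norm]
    have : u - x = (((α n : ℝ) : ℂ))⁻¹ • S n y := by rw [hu]; abel
    rw [this, norm_smul, norm_inv, hαC, inv_mul_eq_div]
    exact hn1
  have hTcalc : (T ^ n) (((α n : ℝ) : ℂ) • u) = ((α n : ℝ) : ℂ) • (T ^ n) x + (T ^ n) (S n y) := by
    rw [hu, smul_add, smul_inv_smul₀ hαne, map_add, map_smul]
  have hinV : (T ^ n) (((α n : ℝ) : ℂ) • u) ∈ V := by
    apply hball₂
    rw [Metric.mem_ball, dist_eq_norm, hTcalc]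
    have heq : ((α n : ℝ) : ℂ) • (T ^ n) x + (T ^ n) (S n y) - y
        = ((α n : ℝ) : ℂ) • (T ^ n) x + ((T ^ n) (S n y) - y) := by abel
    rw [heq]
    calc ‖((α n : ℝ) : ℂ) • (T ^ n) x + ((T ^ n) (S n y) - y)‖
        ≤ ‖((α n : ℝ) : ℂ) • (T ^ n) x‖ + ‖(T ^ n) (S n y) - y‖ := norm_add_le _ _
      _ < ε₂ / 2 + ε₂ / 2 := by
          apply add_lt_add _ hn3
          rw [norm_smul, hαC]; exact hn2
      _ = ε₂ := by ring
  exact ⟨(T ^ n) (((α n : ℝ) : ℂ) • u), ⟨((α n : ℝ) : ℂ) • u,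
    Set.smul_mem_smul_set huU, rfl⟩, hinV⟩
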